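/- Suppose the abelian group G is the direct limit of matrices Cₙ : ℤ^s → ℤ^s, where each Cₙ has a common left eigenvector w ∈ ℤ^{1×s} with eigenvalue cₙ₊₁ ∈ ℤ, cₙ₊₁ ≥ 1 (i.e., w Cₙ = cₙ₊₁ w), and a common right eigenvector v ∈ ℤ^s with w·v ≠ 0. Then v is an eigenvector for the same eigenvalue cₙ₊₁ for each Cₙ, and the map t : G → ℚ defined by t[a, n] = (w·a)/(c₁⋯cₙ) satisfies: the subgroup H = ⋃ₙ ℤ·[v, n] of G maps under t onto a subgroup of finite index in t(G), so that ker t ⊕ H has finite index in G (the extension 0 → ker t → G → t(G) → 0 is nearly split). -/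

import Mathlib

open Matrix

/-- The product `C (n+j-1) * ⋯ * C (n+1) * C n` of the transition matrices from level
`n` to level `n + j`. -/
def matProd {ι : Type*} [Fintype ι] [DecidableEq ι]
    (C : ℕ → Matrix ι ι ℤ) (n : ℕ) : ℕ → Matrix ι ι ℤ
  | 0 => 1
  | j + 1 => C (n + j) * matProd C n j

/-- if G = lim Cₙ with common left eigenvector w (eigenvalue cₙ ≥ 1) and
common right eigenvector v with w·v ≠ 0, then v is a cₙ-eigenvector of each Cₙ, and for
the trace t[a,n] = (w·a)/(c₀⋯cₙ₋₁) and H = ⋃ₙ ℤ·[v,n], we have ker t ∩ H = 0 and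
ker t ⊔ H of finite index in G (the extension is nearly split). -/
theorem stmt18 {s : ℕ} (C : ℕ → Matrix (Fin s) (Fin s) ℤ)
    (w : Fin s → ℤ) (hw : w ≠ 0) (c : ℕ → ℤ) (hc : ∀ n, 1 ≤ c n)
    (heigw : ∀ n, Matrix.vecMul w (C n) = c n • w)
    (v : Fin s → ℤ) (d : ℕ → ℤ) (heigv : ∀ n, (C n).mulVec v = d n • v)
    (hwv : w ⬝ᵥ v ≠ 0)
    {G : Type*} [AddCommGroup G] (φ : ℕ → (Fin s → ℤ) →+ G)
    (hcomp : ∀ n a, φ n a = φ (n + 1) ((C n).mulVec a))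
    (hsurj : ∀ g : G, ∃ n a, g = φ n a)
    (hker : ∀ n a, φ n a = 0 → ∃ j, (matProd C n j).mulVec a = 0)
    (t : G →+ ℚ)
    (ht : ∀ n a, (∏ i ∈ Finset.range n, (c i : ℚ)) * t (φ n a) = ((w ⬝ᵥ a : ℤ) : ℚ)) :
    (∀ n, (C n).mulVec v = c n • v) ∧
    t.ker ⊓ AddSubgroup.closure {g : G | ∃ n, g = φ n v} = ⊥ ∧
    (t.ker ⊔ AddSubgroup.closure {g : G | ∃ n, g = φ n v}).index ≠ 0 := by
  -- Part 1: v is a c n eigenvector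
  have part1 : ∀ n, (C n).mulVec v = c n • v := by
    intro n
    have h1 : w ⬝ᵥ (C n).mulVec v = c n * (w ⬝ᵥ v) := by
      rw [Matrix.dotProduct_mulVec, heigw n, smul_dotProduct, smul_eq_mul]
    have h2 : w ⬝ᵥ (C n).mulVec v = d n * (w ⬝ᵥ v) := by
      rw [heigv n, dotProduct_smul, smul_eq_mul]
    have hdc : d n = c n := mul_right_cancel₀ hwv (h2.symm.trans h1)
    rw [heigv n, hdc]
  -- products of the c's are nonzero
  have hP : ∀ n, (∏ i ∈ Finset.range n, (c i : ℚ)) ≠ 0 := by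
    intro n
    refine ne_of_gt (Finset.prod_pos fun i _ => ?_)
    exact_mod_cast lt_of_lt_of_le zero_lt_one (hc i)
  -- value of t on φ n a
  have htval : ∀ n a, t (φ n a) = ((w ⬝ᵥ a : ℤ) : ℚ) / (∏ i ∈ Finset.range n, (c i : ℚ)) := by
    intro n a
    rw [eq_div_iff (hP n), mul_comm]
    exact ht n a
  have htv : ∀ n, t (φ n v) ≠ 0 := by
    intro n h
    rw [htval n v, div_eq_zero_iff] at h
    rcases h with h | h
    · exact hwv (by exact_mod_cast h)
    · exact hP n h
  -- chain relation
  have hchain : ∀ n, φ n v = c n • φ (n + 1) v := by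
    intro n
    rw [hcomp n v, part1 n, map_zsmul]
  have hchain' : ∀ n m, n ≤ m → ∃ P : ℤ, φ n v = P • φ m v := by
    intro n m hnm
    induction m, hnm using Nat.le_induction with
    | base => exact ⟨1, (one_smul _ _).symm⟩
    | succ m hm ih =>
      obtain ⟨P, hPe⟩ := ih
      exact ⟨P * c m, by rw [hPe, hchain m, smul_smul]⟩
  -- elements of H
  have hH : ∀ x ∈ AddSubgroup.closure {g : G | ∃ n, g = φ n v}, ∃ n k, x = (k : ℤ) • φ n v := by
    intro x hx
    induction hx using AddSubgroup.closure_induction with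
    | mem g hg => obtain ⟨n, rfl⟩ := hg; exact ⟨n, 1, (one_smul _ _).symm⟩
    | zero => exact ⟨0, 0, by simp⟩
    | add x y hx' hy' ihx ihy =>
      obtain ⟨n, k, rfl⟩ := ihx
      obtain ⟨m, l, rfl⟩ := ihy
      rcases le_total n m with h | h
      · obtain ⟨P, hPe⟩ := hchain' n m h
        exact ⟨m, k * P + l, by rw [hPe, smul_smul, add_smul]⟩
      · obtain ⟨P, hPe⟩ := hchain' m n h
        exact ⟨n, k + l * P, by rw [hPe, smul_smul, add_smul]⟩
    | neg x hx' ih =>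
      obtain ⟨n, k, rfl⟩ := ih
      exact ⟨n, -k, by rw [neg_smul]⟩
  refine ⟨part1, ?_, ?_⟩
  · rw [eq_bot_iff]
    intro x hx
    rw [AddSubgroup.mem_inf] at hx
    obtain ⟨n, k, rfl⟩ := hH x hx.2
    have h0 : t ((k : ℤ) • φ n v) = 0 := hx.1
    rw [map_zsmul, zsmul_eq_mul] at h0
    rcases mul_eq_zero.mp h0 with h | h
    · have : k = 0 := by exact_mod_cast h
      simp [this]
    · exact absurd h (htv n)
  · -- finite index
    set K := t.ker ⊔ AddSubgroup.closure {g : G | ∃ n, g = φ n v} with hK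
    -- W • φ n a ∈ K
    have hWK : ∀ n a, (w ⬝ᵥ v) • φ n a ∈ K := by
      intro n a
      have hk : (w ⬝ᵥ v) • φ n a - (w ⬝ᵥ a) • φ n v ∈ t.ker := by
        rw [AddMonoidHom.mem_ker, map_sub, map_zsmul, map_zsmul, htval n a, htval n v]
        push_cast
        field_simp
        ring
      have h1 : φ n v ∈ AddSubgroup.closure {g : G | ∃ n, g = φ n v} :=
        AddSubgroup.subset_closure ⟨n, rfl⟩
      have hm : (w ⬝ᵥ a) • φ n v ∈ K :=
        AddSubgroup.mem_sup_right (zsmul_mem h1 _)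
      have := add_mem (AddSubgroup.mem_sup_left hk) hm
      simpa using this
    set M : ℕ := (w ⬝ᵥ v).natAbs with hM
    have hMne : M ≠ 0 := Int.natAbs_ne_zero.mpr hwv
    haveI : NeZero M := ⟨hMne⟩
    have hMK : ∀ n a, (M : ℤ) • φ n a ∈ K := by
      intro n a
      rcases Int.natAbs_eq (w ⬝ᵥ v) with h | h
      · rw [hM, ← h]; exact hWK n a
      · have : (M : ℤ) = -(w ⬝ᵥ v) := by rw [hM]; omega
        rw [this, neg_smul]
        exact neg_mem (hWK n a)
    haveI : Finite (G ⧸ K) := by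
      set π := QuotientAddGroup.mk' K with hπ
      -- well-definedness mod M
      have hwd : ∀ n (a b : Fin s → ℤ), (∀ i, (M : ℤ) ∣ a i - b i) → π (φ n a) = π (φ n b) := by
        intro n a b hab
        rw [QuotientAddGroup.mk'_eq_mk']
        refine ⟨φ n b - φ n a, ?_, by abel⟩
        have : φ n b - φ n a = φ n (b - a) := by rw [map_sub]
        rw [this]
        have hba : b - a = (M : ℤ) • fun i => (b i - a i) / (M : ℤ) := by
          funext i
          have : (M : ℤ) ∣ b i - a i := (dvd_sub_comm).mp (hab i)
          simp only [Pi.sub_apply, Pi.smul_apply, smul_eq_mul]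
          exact (Int.mul_ediv_cancel' this).symm
        rw [hba, map_zsmul]
        exact hMK n _
      -- ranges
      set R : ℕ → Set (G ⧸ K) := fun n => Set.range (fun a : Fin s → ℤ => π (φ n a)) with hR
      have hmono : ∀ {n m}, n ≤ m → R n ⊆ R m := by
        intro n m hnm
        induction m, hnm using Nat.le_induction with
        | base => exact subset_rfl
        | succ m hm ih =>
          refine ih.trans ?_
          rintro x ⟨a, rfl⟩
          refine ⟨(C m).mulVec a, ?_⟩
          show π (φ (m + 1) ((C m).mulVec a)) = π (φ m a)
          rw [← hcomp m a]
      have hcover : ∀ q : G ⧸ K, ∃ n, q ∈ R n := by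
        intro q
        obtain ⟨g, rfl⟩ := QuotientAddGroup.mk'_surjective K q
        obtain ⟨n, a, rfl⟩ := hsurj g
        exact ⟨n, a, rfl⟩
      -- R n is contained in range of a map from a finite type
      have hbound : ∀ n, ∃ g : (Fin s → ZMod M) → G ⧸ K, R n ⊆ Set.range g := by
        intro n
        refine ⟨fun x => π (φ n (fun i => ((x i).val : ℤ))), ?_⟩
        rintro q ⟨a, rfl⟩
        refine ⟨fun i => (a i : ZMod M), ?_⟩
        refine hwd n _ _ fun i => ?_
        refine (ZMod.intCast_zmod_eq_zero_iff_dvd _ M).mp ?_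
        push_cast
        simp [ZMod.natCast_val, ZMod.cast_id', sub_self]
      by_contra hfin
      rw [not_finite_iff_infinite] at hfin
      obtain ⟨F, hFuniv, hFcard⟩ := (Set.infinite_univ (α := G ⧸ K)).exists_subset_card_eq
        (Fintype.card (Fin s → ZMod M) + 1)
      classical
      choose f hf using hcover
      have hFsub : ↑F ⊆ R (F.sup f) := by
        intro x hx
        exact hmono (Finset.le_sup hx) (hf x)
      obtain ⟨g, hg⟩ := hbound (F.sup f)
      have hFsub2 : F ⊆ Finset.univ.image g := by
        intro x hx
        rw [Finset.mem_image]
        obtain ⟨y, hy⟩ := hg (hFsub hx)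
        exact ⟨y, Finset.mem_univ y, hy⟩
      have := Finset.card_le_card hFsub2
      rw [hFcard] at this
      have hle := this.trans (Finset.card_image_le)
      rw [Finset.card_univ] at hle
      omega
    exact AddSubgroup.index_ne_zero_of_finite
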